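/- Let a, b be real numbers with 0 < a < 1 and 0 < b < 1. Then for all real w with 0 < w < 1, d/dw [ −log w − ab·w·₄F₃(a+1, b+1, 1, 1; 2, 2, 2; w) ] = −₂F₁(a, b; 1; w)/w. Equivalently, the function G(t) := −log(1−t) − ab(1−t)·₄F₃(a+1, b+1, 1, 1; 2, 2, 2; 1−t) satisfies (t−1)·G′(t) = −₂F₁(a, b; 1; 1−t) for 0 < t < 1. -/

import Mathlib

set_option autoImplicit false

/-- Pochhammer symbol `(a)_n = a(a+1)⋯(a+n−1)` for a real number. -/
noncomputable def pochR (a : ℝ) (n : ℕ) : ℝ := ∏ k ∈ Finset.range n, (a + k)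

/-- Gauss hypergeometric series `₂F₁(a,b;c;x)` (real). -/
noncomputable def hyp2F1 (a b c x : ℝ) : ℝ :=
  ∑' n : ℕ, (pochR a n * pochR b n) / (pochR c n * (n.factorial : ℝ)) * x ^ n

/-- Generalized hypergeometric series `₄F₃(a₁,a₂,a₃,a₄;b₁,b₂,b₃;x)` (real). -/
noncomputable def hyp4F3 (a₁ a₂ a₃ a₄ b₁ b₂ b₃ x : ℝ) : ℝ :=
  ∑' n : ℕ, (pochR a₁ n * pochR a₂ n * pochR a₃ n * pochR a₄ n) /
    (pochR b₁ n * pochR b₂ n * pochR b₃ n * (n.factorial : ℝ)) * x ^ n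

lemma pochR_pos {a : ℝ} (ha : 0 < a) (n : ℕ) : 0 < pochR a n :=
  Finset.prod_pos fun k _ => by positivity

lemma pochR_one (n : ℕ) : pochR 1 n = n.factorial := by
  induction n with
  | zero => simp [pochR]
  | succ n ih =>
    rw [pochR, Finset.prod_range_succ, ← pochR, ih]
    push_cast [Nat.factorial_succ]; ring

lemma pochR_two (n : ℕ) : pochR 2 n = (n + 1).factorial := by
  induction n with
  | zero => simp [pochR]
  | succ n ih =>
    rw [pochR, Finset.prod_range_succ, ← pochR, ih]
    push_cast [Nat.factorial_succ]; ring

lemma pochR_succ (a : ℝ) (n : ℕ) : pochR a (n + 1) = a * pochR (a + 1) n := by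
  rw [pochR, Finset.prod_range_succ', pochR]
  simp only [Nat.cast_zero, add_zero]
  rw [mul_comm]
  congr 1
  apply Finset.prod_congr rfl
  intro k _
  push_cast; ring

lemma pochR_le {a : ℝ} (ha0 : 0 < a) (ha1 : a ≤ 1) (n : ℕ) :
    pochR a n ≤ n.factorial := by
  rw [← pochR_one]
  apply Finset.prod_le_prod
  · intro k _; positivity
  · intro k _; linarith

/-- The coefficient of `₂F₁(a,b;1;x)`. -/
noncomputable def coefC (a b : ℝ) (n : ℕ) : ℝ :=
  pochR a n * pochR b n / ((n.factorial : ℝ) * n.factorial)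

lemma coefC_pos {a b : ℝ} (ha : 0 < a) (hb : 0 < b) (n : ℕ) : 0 < coefC a b n := by
  have h1 := pochR_pos ha n
  have h2 := pochR_pos hb n
  have h3 : (0:ℝ) < (n.factorial : ℝ) := by exact_mod_cast n.factorial_pos
  exact div_pos (mul_pos h1 h2) (mul_pos h3 h3)

lemma coefC_le_one {a b : ℝ} (ha0 : 0 < a) (ha1 : a ≤ 1) (hb0 : 0 < b) (hb1 : b ≤ 1)
    (n : ℕ) : coefC a b n ≤ 1 := by
  have h3 : (0:ℝ) < (n.factorial : ℝ) := by exact_mod_cast n.factorial_pos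
  rw [coefC, div_le_one (mul_pos h3 h3)]
  have := pochR_le ha0 ha1 n
  have := pochR_le hb0 hb1 n
  have := (pochR_pos hb0 n).le
  have := (pochR_pos ha0 n).le
  nlinarith [pochR_pos ha0 n, pochR_pos hb0 n]

lemma coefC_zero (a b : ℝ) : coefC a b 0 = 1 := by simp [coefC, pochR]

lemma hyp2F1_eq (a b x : ℝ) : hyp2F1 a b 1 x = ∑' n : ℕ, coefC a b n * x ^ n := by
  apply tsum_congr
  intro n
  rw [coefC, pochR_one]

/-- key algebraic identity between the coefficients. -/
lemma coef_key (a b : ℝ) (n : ℕ) :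
    a * b * ((pochR (a+1) n * pochR (b+1) n * pochR 1 n * pochR 1 n) /
      (pochR 2 n * pochR 2 n * pochR 2 n * (n.factorial : ℝ)))
    = coefC a b (n+1) / ((n : ℝ) + 1) := by
  have hfac : ((n.factorial : ℝ)) ≠ 0 := Nat.cast_ne_zero.2 n.factorial_ne_zero
  have hn1 : ((n : ℝ) + 1) ≠ 0 := by positivity
  rw [coefC, pochR_succ a n, pochR_succ b n, pochR_one, pochR_two, Nat.factorial_succ]
  push_cast
  field_simp

lemma sum4F3_eq (a b z : ℝ) :
    a * b * z * hyp4F3 (a + 1) (b + 1) 1 1 2 2 2 z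
      = ∑' n : ℕ, coefC a b (n+1) / ((n : ℝ) + 1) * z ^ (n+1) := by
  rw [hyp4F3, ← tsum_mul_left]
  apply tsum_congr
  intro n
  have h := coef_key a b n
  calc a * b * z * ((pochR (a+1) n * pochR (b+1) n * pochR 1 n * pochR 1 n) /
        (pochR 2 n * pochR 2 n * pochR 2 n * (n.factorial : ℝ)) * z ^ n)
      = a * b * ((pochR (a+1) n * pochR (b+1) n * pochR 1 n * pochR 1 n) /
        (pochR 2 n * pochR 2 n * pochR 2 n * (n.factorial : ℝ))) * (z * z ^ n) := by ring
    _ = coefC a b (n+1) / ((n : ℝ) + 1) * z ^ (n+1) := by rw [h, pow_succ']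

lemma summable_coefC {a b : ℝ} (ha0 : 0 < a) (ha1 : a ≤ 1) (hb0 : 0 < b) (hb1 : b ≤ 1)
    {x : ℝ} (hx : |x| < 1) : Summable fun n : ℕ => coefC a b n * x ^ n := by
  apply Summable.of_norm_bounded
    (summable_geometric_of_lt_one (abs_nonneg x) hx)
  intro n
  rw [norm_mul, Real.norm_eq_abs, Real.norm_eq_abs, abs_pow,
    abs_of_pos (coefC_pos ha0 hb0 n)]
  calc coefC a b n * |x| ^ n ≤ 1 * |x| ^ n := by
        apply mul_le_mul_of_nonneg_right (coefC_le_one ha0 ha1 hb0 hb1 n) (by positivity)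
    _ = |x| ^ n := one_mul _

lemma series_hasDerivAt {a b : ℝ} (ha0 : 0 < a) (ha1 : a ≤ 1) (hb0 : 0 < b) (hb1 : b ≤ 1)
    {w : ℝ} (hw0 : 0 < w) (hw1 : w < 1) :
    HasDerivAt (fun z : ℝ => ∑' n : ℕ, coefC a b (n+1) / ((n : ℝ) + 1) * z ^ (n+1))
      (∑' n : ℕ, coefC a b (n+1) * w ^ n) w := by
  set r : ℝ := (w + 1) / 2 with hr
  have hr0 : 0 < r := by rw [hr]; linarith
  have hr1 : r < 1 := by rw [hr]; linarith
  have hwmem : w ∈ Set.Ioo (-r) r := ⟨by rw [hr]; linarith, by rw [hr]; linarith⟩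
  refine hasDerivAt_tsum_of_isPreconnected
    (u := fun n => r ^ n) (g' := fun n y => coefC a b (n+1) * y ^ n)
    (summable_geometric_of_lt_one hr0.le hr1)
    isOpen_Ioo (convex_Ioo _ _).isPreconnected ?_ ?_
    (y₀ := 0) ⟨by linarith, hr0⟩ ?_ hwmem
  · intro n y _
    have h := (hasDerivAt_pow (n+1) y).const_mul (coefC a b (n+1) / ((n : ℝ) + 1))
    refine h.congr_deriv ?_
    have hn1 : ((n : ℝ) + 1) ≠ 0 := by positivity
    push_cast
    field_simp
  · intro n y hy
    rw [Real.norm_eq_abs, abs_mul, abs_of_pos (coefC_pos ha0 hb0 (n+1)), abs_pow]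
    have hyr : |y| ≤ r := le_of_lt (abs_lt.mpr ⟨hy.1, hy.2⟩)
    calc coefC a b (n+1) * |y| ^ n ≤ 1 * r ^ n := by
          apply mul_le_mul (coefC_le_one ha0 ha1 hb0 hb1 (n+1))
            (pow_le_pow_left₀ (abs_nonneg y) hyr n) (by positivity) one_pos.le
      _ = r ^ n := one_mul _
  · have : (fun n : ℕ => coefC a b (n+1) / ((n : ℝ) + 1) * (0:ℝ) ^ (n+1)) = fun _ => 0 := by
      funext n; simp
    rw [this]
    exact summable_zero

lemma part1 {a b : ℝ} (ha0 : 0 < a) (ha1 : a < 1) (hb0 : 0 < b) (hb1 : b < 1) :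
    ∀ w : ℝ, 0 < w → w < 1 →
      HasDerivAt
        (fun w : ℝ => -Real.log w - a * b * w * hyp4F3 (a + 1) (b + 1) 1 1 2 2 2 w)
        (-hyp2F1 a b 1 w / w) w := by
  intro w hw0 hw1
  have hfun : (fun w : ℝ => -Real.log w - a * b * w * hyp4F3 (a + 1) (b + 1) 1 1 2 2 2 w)
      = fun z : ℝ => -Real.log z - ∑' n : ℕ, coefC a b (n+1) / ((n : ℝ) + 1) * z ^ (n+1) := by
    funext z
    rw [sum4F3_eq]
  rw [hfun]
  have hlog : HasDerivAt (fun z : ℝ => -Real.log z) (-w⁻¹) w :=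
    (Real.hasDerivAt_log hw0.ne').neg
  have hS := series_hasDerivAt ha0 ha1.le hb0 hb1.le hw0 hw1
  have hmain := hlog.sub hS
  refine hmain.congr_deriv ?_
  -- value identity
  have habs : |w| < 1 := abs_lt.mpr ⟨by linarith, hw1⟩
  have hsum : Summable fun n : ℕ => coefC a b n * w ^ n :=
    summable_coefC ha0 ha1.le hb0 hb1.le habs
  have h2F1 : hyp2F1 a b 1 w = 1 + w * ∑' n : ℕ, coefC a b (n+1) * w ^ n := by
    rw [hyp2F1_eq, hsum.tsum_eq_zero_add, coefC_zero, pow_zero, mul_one]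
    congr 1
    rw [← tsum_mul_left]
    apply tsum_congr
    intro n
    rw [pow_succ']
    ring
  rw [h2F1]
  field_simp
  ring

theorem stmt9 (a b : ℝ) (ha0 : 0 < a) (ha1 : a < 1) (hb0 : 0 < b) (hb1 : b < 1) :
    (∀ w : ℝ, 0 < w → w < 1 →
      HasDerivAt
        (fun w : ℝ => -Real.log w - a * b * w * hyp4F3 (a + 1) (b + 1) 1 1 2 2 2 w)
        (-hyp2F1 a b 1 w / w) w) ∧
    (∀ t : ℝ, 0 < t → t < 1 →
      (t - 1) * deriv
          (fun t : ℝ =>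
            -Real.log (1 - t) - a * b * (1 - t) * hyp4F3 (a + 1) (b + 1) 1 1 2 2 2 (1 - t)) t
        = -hyp2F1 a b 1 (1 - t)) := by
  refine ⟨part1 ha0 ha1 hb0 hb1, ?_⟩
  intro t ht0 ht1
  have h1t0 : 0 < 1 - t := by linarith
  have h1t1 : 1 - t < 1 := by linarith
  have hf := part1 ha0 ha1 hb0 hb1 (1 - t) h1t0 h1t1
  have hinner : HasDerivAt (fun t : ℝ => 1 - t) (-1) t := by
    simpa using (hasDerivAt_id t).const_sub 1
  have hG := hf.comp t hinner
  simp only [Function.comp_def] at hG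
  rw [hG.deriv]
  have h1t : (1:ℝ) - t ≠ 0 := h1t0.ne'
  field_simp
  ring
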